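/- Let Z ⊆ ℝ^d be a zonotope with generator set 𝒢 all of whose extreme points lie in {0,1/2,1}^d, and let 𝒜 ⊆ 𝒢 be minimally linearly dependent, i.e., 𝒜 is linearly dependent over ℝ but every proper subset of 𝒜 is linearly independent. Then there exists a family (λ_g)_{g∈𝒜} with each λ_g ∈ {1,−1} such that Σ_{g∈𝒜} λ_g g = 0. -/

import Mathlib

open Set Pointwise
open Matrix

noncomputable section

/-- `Z` is a zonotope with generator set `G`: `Z = t + Σ_{g ∈ G} conv{0,g}` for some
translation `t`, where the generators are nonzero and pairwise non-collinear. -/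
def IsZonotopeWithGenerators {d : ℕ} (Z : Set (Fin d → ℝ)) (G : Finset (Fin d → ℝ)) : Prop :=
  (∀ g ∈ G, g ≠ 0) ∧
  (∀ g ∈ G, ∀ h ∈ G, g ≠ h → ∀ r : ℝ, g ≠ r • h) ∧
  ∃ t : Fin d → ℝ,
    Z = {x | ∃ c : (Fin d → ℝ) → ℝ, (∀ g, 0 ≤ c g ∧ c g ≤ 1) ∧ x = t + ∑ g ∈ G, c g • g}

/-- A set is half-integral when all of its extreme points have coordinates in `{0,1/2,1}`. -/
def IsHalfIntegral {d : ℕ} (P : Set (Fin d → ℝ)) : Prop :=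
  ∀ x ∈ Set.extremePoints ℝ P, ∀ i, x i = 0 ∨ x i = 1/2 ∨ x i = 1

/-- A finite set of vectors is minimally linearly dependent when it is linearly dependent
but every proper subset of it is linearly independent. -/
def MinLinDep {d : ℕ} (A : Finset (Fin d → ℝ)) : Prop :=
  ¬ LinearIndependent ℝ (fun x : (A : Set (Fin d → ℝ)) => x.val) ∧
  ∀ B : Finset (Fin d → ℝ), B ⊂ A →
    LinearIndependent ℝ (fun x : (B : Set (Fin d → ℝ)) => x.val)


lemma aux_exists_small {α : Type*} (S : Finset α) (f b : α → ℝ)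
    (hf : ∀ h ∈ S, 0 ≤ f h) (hb : ∀ h ∈ S, 0 < b h) :
    ∃ ε : ℝ, 0 < ε ∧ ∀ h ∈ S, ε * f h < b h := by
  classical
  revert hf hb
  induction S using Finset.induction_on with
  | empty => exact fun _ _ => ⟨1, one_pos, by simp⟩
  | @insert v S hvS ih =>
    intro hf hb
    obtain ⟨ε, hε, hS⟩ := ih (fun h hh => hf _ (Finset.mem_insert_of_mem hh))
      (fun h hh => hb _ (Finset.mem_insert_of_mem hh))
    have hfv : 0 ≤ f v := hf v (Finset.mem_insert_self _ _)
    have hbv : 0 < b v := hb v (Finset.mem_insert_self _ _)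
    have hden : 0 < f v + 1 := by linarith
    refine ⟨min ε (b v / (f v + 1)), lt_min hε (div_pos hbv hden), ?_⟩
    intro h hh
    rcases Finset.mem_insert.mp hh with rfl | hh
    · calc min ε (b h / (f h + 1)) * f h ≤ (b h / (f h + 1)) * f h := by
            apply mul_le_mul_of_nonneg_right (min_le_right _ _) hfv
      _ < b h := by rw [div_mul_eq_mul_div, div_lt_iff₀ hden]; nlinarith
    · calc min ε (b v / (f v + 1)) * f h ≤ ε * f h := by
            apply mul_le_mul_of_nonneg_right (min_le_left _ _) (hf h (Finset.mem_insert_of_mem hh))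
      _ < b h := hS h hh

lemma aux_dot_sum {d : ℕ} {α : Type*} (u : Fin d → ℝ) (s : Finset α) (f : α → Fin d → ℝ) :
    u ⬝ᵥ (∑ g ∈ s, f g) = ∑ g ∈ s, u ⬝ᵥ f g := by
  classical
  induction s using Finset.induction_on with
  | empty => simp [dotProduct_zero]
  | @insert v s hvs ih =>
    rw [Finset.sum_insert hvs, Finset.sum_insert hvs, dotProduct_add, ih]

lemma exists_dot_ne_zero {d : ℕ} (g : Fin d → ℝ) (S : Finset (Fin d → ℝ))
    (hS : ∀ h ∈ S, h ∉ Submodule.span ℝ ({g} : Set (Fin d → ℝ))) :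
    ∃ w : Fin d → ℝ, w ⬝ᵥ g = 0 ∧ ∀ h ∈ S, w ⬝ᵥ h ≠ 0 := by
  classical
  revert hS
  induction S using Finset.induction_on with
  | empty => exact fun _ => ⟨0, zero_dotProduct g, by simp⟩
  | @insert v S hvS ih =>
    intro hS
    obtain ⟨w, hwg, hw⟩ := ih (fun h hh => hS h (Finset.mem_insert_of_mem hh))
    have hvspan : v ∉ Submodule.span ℝ ({g} : Set (Fin d → ℝ)) :=
      hS v (Finset.mem_insert_self _ _)
    set v' : Fin d → ℝ := v - ((v ⬝ᵥ g) / (g ⬝ᵥ g)) • g with hv'def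
    have hv'g : v' ⬝ᵥ g = 0 := by
      by_cases hg : g = 0
      · simp [hv'def, hg]
      · have hgg : g ⬝ᵥ g ≠ 0 := fun h => hg (dotProduct_self_eq_zero.mp h)
        rw [hv'def, sub_dotProduct, smul_dotProduct, smul_eq_mul,
          div_mul_cancel₀ _ hgg, sub_self]
    have hv'ne : v' ≠ 0 := by
      intro h0
      apply hvspan
      refine Submodule.mem_span_singleton.mpr ⟨(v ⬝ᵥ g) / (g ⬝ᵥ g), ?_⟩
      have := sub_eq_zero.mp (hv'def ▸ h0)
      exact this.symm
    have hv'v : v' ⬝ᵥ v ≠ 0 := by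
      have : v' ⬝ᵥ v = v' ⬝ᵥ v' := by
        have hv : v = v' + ((v ⬝ᵥ g) / (g ⬝ᵥ g)) • g := by rw [hv'def]; abel
        rw [hv, dotProduct_add, dotProduct_smul, smul_eq_mul]
        have hgv' : v' ⬝ᵥ g = 0 := hv'g
        rw [hgv']; ring
      rw [this]
      exact fun h => hv'ne (dotProduct_self_eq_zero.mp h)
    obtain ⟨ε, hε⟩ := Infinite.exists_notMem_finset
      ((insert v S).image fun u => -(w ⬝ᵥ u) / (v' ⬝ᵥ u))
    refine ⟨w + ε • v', ?_, ?_⟩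
    · rw [add_dotProduct, smul_dotProduct, hwg, hv'g, smul_zero, add_zero]
    · intro u hu
      rw [add_dotProduct, smul_dotProduct, smul_eq_mul]
      by_cases hz : v' ⬝ᵥ u = 0
      · rw [hz, mul_zero, add_zero]
        rcases Finset.mem_insert.mp hu with rfl | hu
        · exact absurd hz hv'v
        · exact hw u hu
      · intro h0
        apply hε
        rw [Finset.mem_image]
        refine ⟨u, hu, ?_⟩
        field_simp
        linarith

lemma vertex_mem_extremePoints {d : ℕ} {Z : Set (Fin d → ℝ)} {G : Finset (Fin d → ℝ)}
    {t : Fin d → ℝ}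
    (hrep : Z = {x | ∃ c : (Fin d → ℝ) → ℝ, (∀ g, 0 ≤ c g ∧ c g ≤ 1) ∧ x = t + ∑ g ∈ G, c g • g})
    (u : Fin d → ℝ) (hu : ∀ h ∈ G, u ⬝ᵥ h ≠ 0) :
    (t + ∑ h ∈ G.filter (fun h => 0 < u ⬝ᵥ h), h) ∈ Set.extremePoints ℝ Z := by
  classical
  set v : Fin d → ℝ := t + ∑ h ∈ G.filter (fun h => 0 < u ⬝ᵥ h), h with hvdef
  have hvZ : v ∈ Z := by
    rw [hrep]
    refine ⟨fun x => if 0 < u ⬝ᵥ x then 1 else 0, fun g => ?_, ?_⟩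
    · dsimp only; by_cases h : 0 < u ⬝ᵥ g <;> simp [h]
    · rw [hvdef]
      congr 1
      rw [Finset.sum_filter]
      apply Finset.sum_congr rfl
      intro g _
      by_cases h : 0 < u ⬝ᵥ g <;> simp [h]
  have key : ∀ y ∈ Z, u ⬝ᵥ y ≤ u ⬝ᵥ v ∧ (u ⬝ᵥ y = u ⬝ᵥ v → y = v) := by
    intro y hy
    rw [hrep] at hy
    obtain ⟨c, hc, rfl⟩ := hy
    have hy' : u ⬝ᵥ (t + ∑ g ∈ G, c g • g) = u ⬝ᵥ t + ∑ g ∈ G, c g * (u ⬝ᵥ g) := by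
      rw [dotProduct_add, aux_dot_sum]
      congr 1
      apply Finset.sum_congr rfl
      intro g _
      rw [dotProduct_smul, smul_eq_mul]
    have hv' : u ⬝ᵥ v = u ⬝ᵥ t + ∑ g ∈ G, (if 0 < u ⬝ᵥ g then u ⬝ᵥ g else 0) := by
      rw [hvdef, dotProduct_add, aux_dot_sum, Finset.sum_filter]
    have hle : ∀ g ∈ G, c g * (u ⬝ᵥ g) ≤ (if 0 < u ⬝ᵥ g then u ⬝ᵥ g else 0) := by
      intro g hg
      rcases hc g with ⟨h0, h1⟩
      split
      · nlinarith
      · next hpos =>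
          push_neg at hpos
          exact mul_nonpos_of_nonneg_of_nonpos h0 hpos
    constructor
    · rw [hy', hv']
      exact add_le_add_right (Finset.sum_le_sum hle) _
    · intro heq
      rw [hy', hv'] at heq
      have hsum : ∑ g ∈ G, c g * (u ⬝ᵥ g) = ∑ g ∈ G, (if 0 < u ⬝ᵥ g then u ⬝ᵥ g else 0) := by
        linarith
      have hterm := (Finset.sum_eq_sum_iff_of_le hle).mp hsum
      rw [hvdef]
      congr 1
      rw [Finset.sum_filter]
      apply Finset.sum_congr rfl
      intro g hg
      have := hterm g hg
      split
      · next hpos =>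
          rw [if_pos hpos] at this
          have hcg : c g = 1 :=
            mul_right_cancel₀ (ne_of_gt hpos) (this.trans (one_mul _).symm)
          rw [hcg, one_smul]
      · next hpos =>
          rw [if_neg hpos] at this
          push_neg at hpos
          have hneg : u ⬝ᵥ g < 0 := lt_of_le_of_ne hpos (hu g hg)
          have hcg : c g = 0 := by
            rcases mul_eq_zero.mp this with h | h
            · exact h
            · exact absurd h (ne_of_lt hneg)
          rw [hcg, zero_smul]
  rw [mem_extremePoints]
  refine ⟨hvZ, ?_⟩
  intro x1 hx1 x2 hx2 hseg
  obtain ⟨a, b, ha, hb, hab, hsum⟩ := hseg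
  have h1 := key x1 hx1
  have h2 := key x2 hx2
  have hdot : a * (u ⬝ᵥ x1) + b * (u ⬝ᵥ x2) = u ⬝ᵥ v := by
    rw [← hsum, dotProduct_add, dotProduct_smul, dotProduct_smul]
    simp [smul_eq_mul]
  have hMv : a * (u ⬝ᵥ v) + b * (u ⬝ᵥ v) = u ⬝ᵥ v := by rw [← add_mul, hab, one_mul]
  have q1 : a * (u ⬝ᵥ x1) ≤ a * (u ⬝ᵥ v) := mul_le_mul_of_nonneg_left h1.1 ha.le
  have q2 : b * (u ⬝ᵥ x2) ≤ b * (u ⬝ᵥ v) := mul_le_mul_of_nonneg_left h2.1 hb.le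
  have e1 : u ⬝ᵥ x1 = u ⬝ᵥ v := mul_left_cancel₀ (ne_of_gt ha) (by linarith)
  have e2 : u ⬝ᵥ x2 = u ⬝ᵥ v := mul_left_cancel₀ (ne_of_gt hb) (by linarith)
  exact ⟨h1.2 e1, h2.2 e2⟩

lemma zon_subset_cube {d : ℕ} {Z : Set (Fin d → ℝ)} {G : Finset (Fin d → ℝ)} {t : Fin d → ℝ}
    (hrep : Z = {x | ∃ c : (Fin d → ℝ) → ℝ, (∀ g, 0 ≤ c g ∧ c g ≤ 1) ∧ x = t + ∑ g ∈ G, c g • g})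
    (hHI : IsHalfIntegral Z) :
    ∀ x ∈ Z, ∀ i, 0 ≤ x i ∧ x i ≤ 1 := by
  classical
  set φ : ((Fin d → ℝ) → ℝ) → (Fin d → ℝ) := fun c => t + ∑ g ∈ G, c g • g with hφ
  have hφc : Continuous φ := by
    apply continuous_const.add
    exact continuous_finset_sum _ (fun g _ => (continuous_apply g).smul continuous_const)
  have hZim : Z = φ '' (Set.pi Set.univ fun _ : (Fin d → ℝ) => Set.Icc (0:ℝ) 1) := by
    rw [hrep]
    ext x
    simp only [Set.mem_image, Set.mem_setOf_eq, Set.mem_univ_pi, Set.mem_Icc, hφ]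
    constructor
    · rintro ⟨c, hc, rfl⟩; exact ⟨c, hc, rfl⟩
    · rintro ⟨c, hc, rfl⟩; exact ⟨c, hc, rfl⟩
  have hcomp : IsCompact Z := hZim ▸ (isCompact_univ_pi fun _ => isCompact_Icc).image hφc
  have hconv : Convex ℝ Z := by
    rw [hrep]
    rintro x ⟨c, hc, rfl⟩ y ⟨c', hc', rfl⟩ a b ha hb hab
    refine ⟨fun g => a * c g + b * c' g,
      fun g => ⟨by dsimp only; nlinarith [(hc g).1, (hc' g).1],
                by dsimp only; nlinarith [(hc g).2, (hc' g).2, (hc g).1, (hc' g).1]⟩, ?_⟩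
    have hterm : ∀ g ∈ G, (a * c g + b * c' g) • g = a • (c g • g) + b • (c' g • g) := by
      intro g _
      rw [add_smul, smul_smul, smul_smul]
    rw [Finset.sum_congr rfl hterm, Finset.sum_add_distrib, ← Finset.smul_sum, ← Finset.smul_sum]
    have ht : a • t + b • t = t := by rw [← add_smul, hab, one_smul]
    rw [smul_add, smul_add]
    conv_rhs => rw [← ht]
    abel
  have hKM := closure_convexHull_extremePoints hcomp hconv
  have hC : Convex ℝ {y : Fin d → ℝ | ∀ j, 0 ≤ y j ∧ y j ≤ 1} := by
    intro p hp q hq a b ha hb hab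
    intro j
    simp only [Pi.add_apply, Pi.smul_apply, smul_eq_mul]
    constructor
    · nlinarith [(hp j).1, (hq j).1]
    · nlinarith [(hp j).2, (hq j).2, (hp j).1, (hq j).1]
  have hCc : IsClosed {y : Fin d → ℝ | ∀ j, 0 ≤ y j ∧ y j ≤ 1} := by
    have : {y : Fin d → ℝ | ∀ j, 0 ≤ y j ∧ y j ≤ 1}
        = Set.pi Set.univ (fun _ : Fin d => Set.Icc (0:ℝ) 1) := by
      ext y; simp [Set.mem_univ_pi, Set.mem_Icc, Pi.le_def, forall_and]
    rw [this]
    exact isClosed_set_pi fun _ _ => isClosed_Icc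
  have hext : Set.extremePoints ℝ Z ⊆ {y : Fin d → ℝ | ∀ j, 0 ≤ y j ∧ y j ≤ 1} := by
    intro y hy j
    rcases hHI y hy j with h | h | h <;> rw [h] <;> norm_num
  have hsub : Z ⊆ {y : Fin d → ℝ | ∀ j, 0 ≤ y j ∧ y j ≤ 1} := by
    conv_lhs => rw [← hKM]
    calc closure (convexHull ℝ (Set.extremePoints ℝ Z))
        ⊆ closure {y : Fin d → ℝ | ∀ j, 0 ≤ y j ∧ y j ≤ 1} :=
          closure_mono (convexHull_min hext hC)
      _ = _ := hCc.closure_eq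
  exact fun x hx i => hsub hx i

lemma colsum_le_one {d : ℕ} {Z : Set (Fin d → ℝ)} {G : Finset (Fin d → ℝ)} {t : Fin d → ℝ}
    (hrep : Z = {x | ∃ c : (Fin d → ℝ) → ℝ, (∀ g, 0 ≤ c g ∧ c g ≤ 1) ∧ x = t + ∑ g ∈ G, c g • g})
    (hHI : IsHalfIntegral Z) :
    ∀ i, ∑ g ∈ G, |g i| ≤ 1 := by
  classical
  intro i
  have hcube := zon_subset_cube hrep hHI
  set cp : (Fin d → ℝ) → ℝ := fun g => if 0 < g i then 1 else 0 with hcp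
  set cm : (Fin d → ℝ) → ℝ := fun g => if g i < 0 then 1 else 0 with hcm
  have hpZ : (t + ∑ g ∈ G, cp g • g) ∈ Z := by
    rw [hrep]
    exact ⟨cp, fun g => by simp only [hcp]; split <;> norm_num, rfl⟩
  have hmZ : (t + ∑ g ∈ G, cm g • g) ∈ Z := by
    rw [hrep]
    exact ⟨cm, fun g => by simp only [hcm]; split <;> norm_num, rfl⟩
  have happ : ∀ c : (Fin d → ℝ) → ℝ, (t + ∑ g ∈ G, c g • g) i = t i + ∑ g ∈ G, c g * g i := by
    intro c
    simp [Finset.sum_apply, Pi.smul_apply, smul_eq_mul]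
  have habs : ∀ g ∈ G, |g i| = cp g * g i - cm g * g i := by
    intro g _
    simp only [hcp, hcm]
    rcases lt_trichotomy (g i) 0 with h | h | h
    · rw [if_neg (by linarith), if_pos h, abs_of_neg h]; ring
    · rw [h]; simp
    · rw [if_pos h, if_neg (by linarith), abs_of_pos h]; ring
  have hup := (hcube _ hpZ i).2
  have hlo := (hcube _ hmZ i).1
  rw [happ] at hup hlo
  calc ∑ g ∈ G, |g i| = ∑ g ∈ G, (cp g * g i - cm g * g i) := Finset.sum_congr rfl habs
    _ = (t i + ∑ g ∈ G, cp g * g i) - (t i + ∑ g ∈ G, cm g * g i) := by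
        rw [Finset.sum_sub_distrib]; ring
    _ ≤ 1 - 0 := by apply sub_le_sub hup hlo
    _ = 1 := by ring

lemma half_entries {d : ℕ} {Z : Set (Fin d → ℝ)} {G : Finset (Fin d → ℝ)}
    (hZ : IsZonotopeWithGenerators Z G) (hHI : IsHalfIntegral Z) :
    ∀ g ∈ G, ∀ i, g i = 0 ∨ 1/2 ≤ |g i| := by
  classical
  obtain ⟨hne, hcol, t, hrep⟩ := hZ
  intro g hg i
  have hspan : ∀ h ∈ G.erase g, h ∉ Submodule.span ℝ ({g} : Set (Fin d → ℝ)) := by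
    intro h hh hmem
    obtain ⟨r, hr⟩ := Submodule.mem_span_singleton.mp hmem
    exact hcol h (Finset.mem_of_mem_erase hh) g hg (Finset.ne_of_mem_erase hh) r hr.symm
  obtain ⟨w, hwg, hw⟩ := exists_dot_ne_zero g (G.erase g) hspan
  obtain ⟨ε, hε, hsmall⟩ := aux_exists_small (G.erase g) (fun h => |g ⬝ᵥ h|) (fun h => |w ⬝ᵥ h|)
    (fun _ _ => abs_nonneg _) (fun h hh => abs_pos.mpr (hw h hh))
  have hgg : 0 < g ⬝ᵥ g := by
    rcases lt_or_eq_of_le (Finset.sum_nonneg fun j _ => mul_self_nonneg (g j)) with h | h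
    · exact h
    · exact absurd (dotProduct_self_eq_zero.mp h.symm) (hne g hg)
  set uP : Fin d → ℝ := w + ε • g with hup
  set uM : Fin d → ℝ := w - ε • g with hum
  have hdp : ∀ h, uP ⬝ᵥ h = w ⬝ᵥ h + ε * (g ⬝ᵥ h) := by
    intro h
    rw [hup, add_dotProduct, smul_dotProduct, smul_eq_mul]
  have hdm : ∀ h, uM ⬝ᵥ h = w ⬝ᵥ h - ε * (g ⬝ᵥ h) := by
    intro h
    rw [hum, sub_dotProduct, smul_dotProduct, smul_eq_mul]
  have hsign : ∀ h ∈ G.erase g,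
      (0 < uP ⬝ᵥ h ↔ 0 < w ⬝ᵥ h) ∧ (0 < uM ⬝ᵥ h ↔ 0 < w ⬝ᵥ h)
        ∧ uP ⬝ᵥ h ≠ 0 ∧ uM ⬝ᵥ h ≠ 0 := by
    intro h hh
    have hb : ε * |g ⬝ᵥ h| < |w ⬝ᵥ h| := hsmall h hh
    have habs : |ε * (g ⬝ᵥ h)| < |w ⬝ᵥ h| := by rw [abs_mul, abs_of_pos hε]; exact hb
    obtain ⟨hl, hr⟩ := abs_lt.mp habs
    rcases lt_or_gt_of_ne (hw h hh) with hneg | hpos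
    · rw [abs_of_neg hneg] at hl hr
      rw [hdp, hdm]
      constructor
      · constructor <;> intro h' <;> linarith
      refine ⟨by constructor <;> intro h' <;> linarith, ?_, ?_⟩ <;> intro h0 <;> linarith
    · rw [abs_of_pos hpos] at hl hr
      rw [hdp, hdm]
      constructor
      · constructor <;> intro h' <;> linarith
      refine ⟨by constructor <;> intro h' <;> linarith, ?_, ?_⟩ <;> intro h0 <;> linarith
  have hupg : 0 < uP ⬝ᵥ g := by
    rw [hdp, hwg, zero_add]; exact mul_pos hε hgg
  have humg : uM ⬝ᵥ g < 0 := by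
    rw [hdm, hwg, zero_sub]
    have := mul_pos hε hgg
    linarith
  have hallP : ∀ h ∈ G, uP ⬝ᵥ h ≠ 0 := by
    intro h hh
    by_cases hhg : h = g
    · rw [hhg]; exact ne_of_gt hupg
    · exact (hsign h (Finset.mem_erase.mpr ⟨hhg, hh⟩)).2.2.1
  have hallM : ∀ h ∈ G, uM ⬝ᵥ h ≠ 0 := by
    intro h hh
    by_cases hhg : h = g
    · rw [hhg]; exact ne_of_lt humg
    · exact (hsign h (Finset.mem_erase.mpr ⟨hhg, hh⟩)).2.2.2
  have hvP := vertex_mem_extremePoints hrep uP hallP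
  have hvM := vertex_mem_extremePoints hrep uM hallM
  have hfilP : G.filter (fun h => 0 < uP ⬝ᵥ h)
      = insert g ((G.erase g).filter (fun h => 0 < w ⬝ᵥ h)) := by
    ext h
    simp only [Finset.mem_filter, Finset.mem_insert, Finset.mem_erase]
    constructor
    · rintro ⟨hhG, hpos⟩
      by_cases hhg : h = g
      · exact Or.inl hhg
      · exact Or.inr ⟨⟨hhg, hhG⟩, ((hsign h (Finset.mem_erase.mpr ⟨hhg, hhG⟩)).1).mp hpos⟩
    · rintro (rfl | ⟨⟨hhg, hhG⟩, hpos⟩)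
      · exact ⟨hg, hupg⟩
      · exact ⟨hhG, ((hsign h (Finset.mem_erase.mpr ⟨hhg, hhG⟩)).1).mpr hpos⟩
  have hfilM : G.filter (fun h => 0 < uM ⬝ᵥ h)
      = (G.erase g).filter (fun h => 0 < w ⬝ᵥ h) := by
    ext h
    simp only [Finset.mem_filter, Finset.mem_erase]
    constructor
    · rintro ⟨hhG, hpos⟩
      by_cases hhg : h = g
      · subst hhg; exact absurd hpos (by linarith)
      · exact ⟨⟨hhg, hhG⟩, ((hsign h (Finset.mem_erase.mpr ⟨hhg, hhG⟩)).2.1).mp hpos⟩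
    · rintro ⟨⟨hhg, hhG⟩, hpos⟩
      exact ⟨hhG, ((hsign h (Finset.mem_erase.mpr ⟨hhg, hhG⟩)).2.1).mpr hpos⟩
  have hgnot : g ∉ (G.erase g).filter (fun h => 0 < w ⬝ᵥ h) := by
    intro hmem
    exact (Finset.mem_erase.mp (Finset.mem_filter.mp hmem).1).1 rfl
  set vM : Fin d → ℝ := t + ∑ h ∈ G.filter (fun h => 0 < uM ⬝ᵥ h), h with hvm
  set vP : Fin d → ℝ := t + ∑ h ∈ G.filter (fun h => 0 < uP ⬝ᵥ h), h with hvp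
  have hdiff : vP = vM + g := by
    rw [hvp, hvm, hfilP, hfilM, Finset.sum_insert hgnot]
    abel
  have eP := hHI _ hvP i
  have eM := hHI _ hvM i
  have hgi : g i = vP i - vM i := by rw [hdiff]; simp
  rcases eP with h | h | h <;> rcases eM with h' | h' | h' <;>
    rw [hgi, h, h'] <;> norm_num [abs_of_nonpos, abs_of_nonneg]

lemma coeffs_zero_of_linIndep {d : ℕ} {B : Finset (Fin d → ℝ)}
    (hB : LinearIndependent ℝ (fun x : (B : Set (Fin d → ℝ)) => x.val))
    (c : (Fin d → ℝ) → ℝ) (hsum : ∑ g ∈ B, c g • g = 0) : ∀ g ∈ B, c g = 0 := by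
  classical
  intro g hg
  have h := Fintype.linearIndependent_iff.mp hB (fun x => c x.val) ?_ ⟨g, hg⟩
  · exact h
  · rw [show (∑ i : (B : Set (Fin d → ℝ)), c i.val • i.val) = ∑ g ∈ B, c g • g from
      Finset.sum_coe_sort B (fun g => c g • g)]
    exact hsum

lemma exists_dep_coeffs {d : ℕ} {A : Finset (Fin d → ℝ)}
    (h : ¬ LinearIndependent ℝ (fun x : (A : Set (Fin d → ℝ)) => x.val)) :
    ∃ c : (Fin d → ℝ) → ℝ, (∑ g ∈ A, c g • g = 0) ∧ (∃ g ∈ A, c g ≠ 0) := by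
  classical
  obtain ⟨f, hf0, x, hx⟩ := Fintype.not_linearIndependent_iff.mp h
  obtain ⟨x, hxA⟩ := x
  refine ⟨fun v => if hv : v ∈ A then f ⟨v, hv⟩ else 0, ?_, x, Finset.mem_coe.mp hxA, ?_⟩
  · rw [← Finset.sum_attach A (fun g => (if hv : g ∈ A then f ⟨g, hv⟩ else (0:ℝ)) • g), ← hf0]
    apply Finset.sum_congr rfl
    intro y _
    obtain ⟨y, hy⟩ := y
    rw [dif_pos hy]
  · dsimp only
    rw [dif_pos (Finset.mem_coe.mp hxA)]
    exact hx


/-- If `𝒜` is a minimally linearly dependent subset of the generators of a half-integral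
zonotope, then there are signs `λ_g ∈ {1,-1}` with `Σ_{g ∈ 𝒜} λ_g g = 0`. -/
theorem halfIntegral_zonotope_minLinDep_signs {d : ℕ} (Z : Set (Fin d → ℝ))
    (G A : Finset (Fin d → ℝ)) (hZ : IsZonotopeWithGenerators Z G)
    (hHI : IsHalfIntegral Z) (hAG : A ⊆ G) (hA : MinLinDep A) :
    ∃ lam : (Fin d → ℝ) → ℝ, (∀ g ∈ A, lam g = 1 ∨ lam g = -1) ∧
      ∑ g ∈ A, lam g • g = 0 := by
  classical
  obtain ⟨hdep, hmin⟩ := hA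
  obtain ⟨c, hcsum, g0', hg0'A, hg0'⟩ := exists_dep_coeffs hdep
  -- all coefficients nonzero
  have hcne : ∀ g ∈ A, c g ≠ 0 := by
    intro g hg hcg
    have hsub : A.erase g ⊂ A := Finset.erase_ssubset hg
    have hind := hmin _ hsub
    have hsum' : ∑ x ∈ A.erase g, c x • x = 0 := by
      rw [← Finset.add_sum_erase A _ hg] at hcsum
      rw [hcg, zero_smul, zero_add] at hcsum
      exact hcsum
    have hall := coeffs_zero_of_linIndep hind c hsum'
    by_cases hgg0 : g = g0'
    · exact hg0' (hgg0 ▸ hcg)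
    · exact hg0' (hall g0' (Finset.mem_erase.mpr ⟨fun h => hgg0 h.symm, hg0'A⟩))
  -- column facts
  have hhalf := half_entries hZ hHI
  obtain ⟨hne0, hncol, t, hrep⟩ := hZ
  have hcolsum := colsum_le_one hrep hHI
  have hcolA : ∀ i, ∑ g ∈ A, |g i| ≤ 1 := by
    intro i
    calc ∑ g ∈ A, |g i| ≤ ∑ g ∈ G, |g i| :=
          Finset.sum_le_sum_of_subset_of_nonneg hAG (fun _ _ _ => abs_nonneg _)
      _ ≤ 1 := hcolsum i
  have hcoord : ∀ i, ∑ g ∈ A, c g * g i = 0 := by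
    intro i
    have := congrFun hcsum i
    simpa [Finset.sum_apply, smul_eq_mul] using this
  -- at most two nonzero entries per column in A, and halves
  have htwo : ∀ i, ∀ g ∈ A, ∀ h ∈ A, g ≠ h → g i ≠ 0 → h i ≠ 0 →
      ∀ k ∈ A, k ≠ g → k ≠ h → k i = 0 := by
    intro i g hgA h hhA hgh hgi hhi k hkA hkg hkh
    by_contra hki
    have hsub : ({g, h, k} : Finset (Fin d → ℝ)) ⊆ A := by
      intro x hx
      simp only [Finset.mem_insert, Finset.mem_singleton] at hx
      rcases hx with rfl | rfl | rfl <;> assumption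
    have hsum3 : |g i| + |h i| + |k i| ≤ ∑ x ∈ A, |x i| := by
      have : ∑ x ∈ ({g, h, k} : Finset (Fin d → ℝ)), |x i| = |g i| + |h i| + |k i| := by
        rw [Finset.sum_insert (by
            simp only [Finset.mem_insert, Finset.mem_singleton]
            push_neg
            exact ⟨hgh, fun h' => hkg h'.symm⟩),
          Finset.sum_insert (by
            simp only [Finset.mem_singleton]
            exact fun h' => hkh h'.symm), Finset.sum_singleton]
        ring
      rw [← this]
      exact Finset.sum_le_sum_of_subset_of_nonneg hsub (fun _ _ _ => abs_nonneg _)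
    have h1 : 1/2 ≤ |g i| := (hhalf g (hAG hgA) i).resolve_left hgi
    have h2 : 1/2 ≤ |h i| := (hhalf h (hAG hhA) i).resolve_left hhi
    have h3 : 1/2 ≤ |k i| := (hhalf k (hAG hkA) i).resolve_left hki
    have := hcolA i
    linarith
  -- each column with a nonzero entry has a second one
  have hpair : ∀ i, ∀ g ∈ A, g i ≠ 0 → ∃ h ∈ A, h ≠ g ∧ h i ≠ 0 := by
    intro i g hgA hgi
    by_contra hno
    push_neg at hno
    have : ∑ x ∈ A, c x * x i = c g * g i := by
      rw [← Finset.add_sum_erase A _ hgA]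
      have : ∑ x ∈ A.erase g, c x * x i = 0 := by
        apply Finset.sum_eq_zero
        intro x hx
        have hxg := Finset.mem_erase.mp hx
        by_cases hxi : x i = 0
        · rw [hxi, mul_zero]
        · exact absurd hxi (by simpa using hno x hxg.2 hxg.1)
      rw [this, add_zero]
    rw [hcoord i] at this
    exact (mul_ne_zero (hcne g hgA) hgi) this.symm
  -- |c| equal on any two generators sharing a column
  have hshare : ∀ i, ∀ g ∈ A, ∀ h ∈ A, g ≠ h → g i ≠ 0 → h i ≠ 0 → |c g| = |c h| := by
    intro i g hgA h hhA hgh hgi hhi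
    -- the column sum reduces to the two terms
    have hsum2 : c g * g i + c h * h i = 0 := by
      have hsub : ({g, h} : Finset (Fin d → ℝ)) ⊆ A := by
        intro x hx
        simp only [Finset.mem_insert, Finset.mem_singleton] at hx
        rcases hx with rfl | rfl <;> assumption
      have heq : ∑ x ∈ ({g, h} : Finset (Fin d → ℝ)), c x * x i = ∑ x ∈ A, c x * x i := by
        apply Finset.sum_subset hsub
        intro x hxA hxnot
        simp only [Finset.mem_insert, Finset.mem_singleton, not_or] at hxnot
        rw [htwo i g hgA h hhA hgh hgi hhi x hxA hxnot.1 hxnot.2, mul_zero]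
      rw [hcoord i] at heq
      rw [← heq, Finset.sum_insert (by simp [hgh]), Finset.sum_singleton]
    have hpairsum : |g i| + |h i| ≤ 1 := by
      have hsub : ({g, h} : Finset (Fin d → ℝ)) ⊆ A := by
        intro x hx
        simp only [Finset.mem_insert, Finset.mem_singleton] at hx
        rcases hx with rfl | rfl <;> assumption
      have : ∑ x ∈ ({g, h} : Finset (Fin d → ℝ)), |x i| = |g i| + |h i| := by
        rw [Finset.sum_insert (by simp [hgh]), Finset.sum_singleton]
      calc |g i| + |h i| = ∑ x ∈ ({g, h} : Finset (Fin d → ℝ)), |x i| := this.symm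
        _ ≤ ∑ x ∈ A, |x i| := Finset.sum_le_sum_of_subset_of_nonneg hsub
            (fun _ _ _ => abs_nonneg _)
        _ ≤ 1 := hcolA i
    have h1 : 1/2 ≤ |g i| := (hhalf g (hAG hgA) i).resolve_left hgi
    have h2 : 1/2 ≤ |h i| := (hhalf h (hAG hhA) i).resolve_left hhi
    have hgi2 : |g i| = 1/2 := by linarith
    have hhi2 : |h i| = 1/2 := by linarith
    have habs : |c g| * |g i| = |c h| * |h i| := by
      rw [← abs_mul, ← abs_mul]
      rw [show c g * g i = -(c h * h i) from by linarith, abs_neg]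
    rw [hgi2, hhi2] at habs
    linarith
  -- the set of generators with the same |c| value
  set B := A.filter (fun g => |c g| = |c g0'|) with hB
  have hg0B : g0' ∈ B := Finset.mem_filter.mpr ⟨hg0'A, rfl⟩
  have hBkey : ∀ i, ∑ g ∈ B, c g * g i = 0 := by
    intro i
    by_cases hcolB : ∃ g ∈ B, g i ≠ 0
    · obtain ⟨g, hgB, hgi⟩ := hcolB
      have hgA : g ∈ A := (Finset.mem_filter.mp hgB).1
      have : ∑ x ∈ B, c x * x i = ∑ x ∈ A, c x * x i := by
        apply Finset.sum_subset (Finset.filter_subset _ _)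
        intro x hxA hxB
        by_cases hxi : x i = 0
        · rw [hxi, mul_zero]
        · exfalso
          apply hxB
          have hxg : x ≠ g := fun h => hxB (h ▸ hgB)
          have := hshare i g hgA x hxA hxg.symm hgi hxi
          exact Finset.mem_filter.mpr ⟨hxA, this.symm.trans (Finset.mem_filter.mp hgB).2⟩
      rw [this, hcoord i]
    · push_neg at hcolB
      apply Finset.sum_eq_zero
      intro x hx
      rw [hcolB x hx, mul_zero]
  have hBsum : ∑ g ∈ B, c g • g = 0 := by
    funext i
    simp only [Finset.sum_apply, Pi.smul_apply, smul_eq_mul, Pi.zero_apply]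
    exact hBkey i
  have hBA : B = A := by
    by_contra hne'
    have hss : B ⊂ A := (Finset.filter_subset _ _).ssubset_of_ne hne'
    have := coeffs_zero_of_linIndep (hmin B hss) c hBsum g0' hg0B
    exact hcne g0' hg0'A this
  have habsall : ∀ g ∈ A, |c g| = |c g0'| := by
    intro g hg
    rw [← hBA] at hg
    exact (Finset.mem_filter.mp hg).2
  refine ⟨fun g => c g / c g0', ?_, ?_⟩
  · intro g hg
    have h1 : |c g / c g0'| = 1 := by
      rw [abs_div, habsall g hg, div_self (abs_ne_zero.mpr (hcne g0' hg0'A))]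
    exact (abs_eq (by norm_num : (0:ℝ) ≤ 1)).mp h1
  · have hstep : ∀ g ∈ A, (c g / c g0') • g = (c g0')⁻¹ • (c g • g) := by
      intro g _
      rw [smul_smul, div_eq_inv_mul]
    rw [Finset.sum_congr rfl hstep, ← Finset.smul_sum, hcsum, smul_zero]
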